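/- arXiv:0712.0684 — 3 statements merged into one kernel-verified Lean document; each statement's English description precedes it below -/
import Mathlib

section
/- Let B be a Blaschke product with zero sequence {z_n} in the open unit disc, let ζ be a point on the unit circle, and let z be in the open unit disc with |z - ζ| < A·|z_n - ζ| for all n, where 0 < A < 1. Then log|B(z)| ≤ -C(A)·(1-|z|)·∑_n (1-|z_n|²)/|ζ - z_n|², where C(A) > 0 depends only on A. In particular one may take C(A) = (1-A)²/(2(1+A)²). -/
noncomputable section

open Complex MeasureTheory Filter Set
open scoped ENNReal Topology

def uDisc : Set ℂ := {z : ℂ | ‖z‖ < 1}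

def uCircle : Set ℂ := {z : ℂ | ‖z‖ = 1}

/-- The reproducing kernel of the model space `K²_Θ`. -/
def kernelK (Θ : ℂ → ℂ) (z w : ℂ) : ℂ :=
  (1 - (starRingEnd ℂ) (Θ z) * Θ w) / (1 - (starRingEnd ℂ) z * w)

/-- A single Blaschke factor, with the convention `|a|/a = 1` when `a = 0`. -/
def blaschkeFactor (a z : ℂ) : ℂ :=
  (if a = 0 then 1 else ((‖a‖ : ℝ) : ℂ) / a) * ((a - z) / (1 - (starRingEnd ℂ) a * z))

/-- The Blaschke product with zero sequence `a`. -/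
def blaschkeProd (a : ℕ → ℂ) (z : ℂ) : ℂ := ∏' n, blaschkeFactor (a n) z

/-- The singular inner function associated with a singular measure `ψ` on the circle. -/
def singInner (ψ : Measure ℂ) (z : ℂ) : ℂ := Complex.exp (-∫ τ, (τ + z) / (τ - z) ∂ψ)

/-- Normalized Lebesgue measure on the unit circle, as a measure on `ℂ`. -/
def circleMeasure : Measure ℂ :=
  Measure.map (fun θ : ℝ => Complex.exp (θ * Complex.I))
    ((ENNReal.ofReal (2 * Real.pi))⁻¹ • volume.restrict (Set.Ioc 0 (2 * Real.pi)))

/-- `f` has radial limit `L` at the boundary point `ζ`. -/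
def radialLimAt (f : ℂ → ℂ) (ζ L : ℂ) : Prop :=
  Tendsto (fun r : ℝ => f ((r : ℂ) * ζ)) (nhdsWithin 1 (Set.Iio 1)) (nhds L)

/-- Stolz angle at `ζ` with aperture `κ`. -/
def stolzAngle (ζ : ℂ) (κ : ℝ) : Set ℂ := {z : ℂ | ‖z - ζ‖ < κ * (1 - ‖z‖)}

/-- `f` has nontangential limit `L` at the boundary point `ζ`. -/
def NTLimAt (f : ℂ → ℂ) (ζ L : ℂ) : Prop :=
  ∀ κ : ℝ, 1 < κ → Tendsto f (nhdsWithin ζ (stolzAngle ζ κ ∩ uDisc)) (nhds L)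

/-- Membership in the Hardy space `H^p` (`1 ≤ p ≤ ∞`), for a function defined on the closed
disc whose values on the circle are its radial limits (a.e.). -/
structure MemHardy (p : ℝ≥0∞) (f : ℂ → ℂ) : Prop where
  anal : DifferentiableOn ℂ f uDisc
  bdd : ∃ M : ℝ≥0∞, M ≠ ⊤ ∧ ∀ r : ℝ, r ∈ Set.Ico (0:ℝ) 1 →
    eLpNorm (fun ζ => f ((r : ℂ) * ζ)) p circleMeasure ≤ M
  bv : ∀ᵐ ζ ∂circleMeasure, radialLimAt f ζ (f ζ)

/-- Membership in the model (star-invariant) subspace `K^p_Θ = H^p ∩ Θ ⋅ conj(H^p₀)`. -/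
def MemKp (p : ℝ≥0∞) (Θ f : ℂ → ℂ) : Prop :=
  MemHardy p f ∧ ∃ g, MemHardy p g ∧ g 0 = 0 ∧
    ∀ᵐ ζ ∂circleMeasure, f ζ = Θ ζ * (starRingEnd ℂ) (g ζ)

/-- An inner function, extended to the circle by its radial boundary values. -/
structure IsInner (Θ : ℂ → ℂ) : Prop where
  anal : DifferentiableOn ℂ Θ uDisc
  bdd : ∀ z ∈ uDisc, ‖Θ z‖ ≤ 1
  bv : ∀ᵐ ζ ∂circleMeasure, radialLimAt Θ ζ (Θ ζ)
  mod : ∀ᵐ ζ ∂circleMeasure, ‖Θ ζ‖ = 1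

/-- The sublevel set `Ω(Θ,ε) = {z ∈ D : |Θ(z)| < ε}`. -/
def levelSet (Θ : ℂ → ℂ) (ε : ℝ) : Set ℂ := {z | z ∈ uDisc ∧ ‖Θ z‖ < ε}

/-- The spectrum `σ(Θ)`: points of the closed disc where `liminf |Θ| = 0`. -/
def specInner (Θ : ℂ → ℂ) : Set ℂ :=
  {ζ : ℂ | ‖ζ‖ ≤ 1 ∧
    ∀ δ : ℝ, 0 < δ → ∃ z ∈ uDisc, ‖z - ζ‖ < δ ∧ ‖Θ z‖ < δ}

/-- Closed arc of the unit circle from angle `a` to angle `b`. -/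
def arcSet (a b : ℝ) : Set ℂ := (fun θ : ℝ => Complex.exp (θ * Complex.I)) '' Set.Icc a b

/-- Open arc of the unit circle from angle `a` to angle `b`. -/
def openArc (a b : ℝ) : Set ℂ := (fun θ : ℝ => Complex.exp (θ * Complex.I)) '' Set.Ioo a b

/-- Carleson square over the arc of angles `[a, b]`. -/
def carlesonSq (a b : ℝ) : Set ℂ :=
  (fun p : ℝ × ℝ => (p.1 : ℂ) * Complex.exp (p.2 * Complex.I)) ''
    (Set.Icc (1 - (b - a) / (2 * Real.pi)) 1 ×ˢ Set.Icc a b)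

/-- Distance between two subsets of `ℂ`. -/
def setDist (s t : Set ℂ) : ℝ := sInf (Set.image2 dist s t)

/-- The Ahern–Clark quantity `|Θ'(ζ)| = ∑ (1-|z_n|²)/|ζ-z_n|² + ∫ dψ(τ)/|ζ-τ|²`,
as an extended real number. -/
def acSum (a : ℕ → ℂ) (ψ : Measure ℂ) (ζ : ℂ) : ℝ≥0∞ :=
  (∑' n, ENNReal.ofReal ((1 - ‖a n‖ ^ 2) / ‖ζ - a n‖ ^ 2)) +
    ∫⁻ τ, ENNReal.ofReal (1 / ‖ζ - τ‖ ^ 2) ∂ψ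

lemma aux_id (c z : ℂ) :
    ‖1 - (starRingEnd ℂ) c * z‖ ^ 2 - ‖c - z‖ ^ 2
      = (1 - ‖c‖ ^ 2) * (1 - ‖z‖ ^ 2) := by
  simp only [Complex.sq_norm, Complex.normSq_apply, Complex.mul_re, Complex.mul_im,
    Complex.sub_re, Complex.sub_im, Complex.one_re, Complex.one_im,
    Complex.conj_re, Complex.conj_im]
  ring

lemma aux_den_ne (c z : ℂ) (hc : ‖c‖ < 1) (hz : ‖z‖ < 1) :
    (1 : ℂ) - (starRingEnd ℂ) c * z ≠ 0 := by
  intro h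
  have h1 : (1 : ℂ) = (starRingEnd ℂ) c * z := by linear_combination h
  have := congrArg (‖·‖) h1
  simp only [norm_one, norm_mul, Complex.norm_conj] at this
  nlinarith [norm_nonneg c, norm_nonneg z]

lemma aux_den_pos (c z : ℂ) (hc : ‖c‖ < 1) (hz : ‖z‖ < 1) :
    0 < ‖1 - (starRingEnd ℂ) c * z‖ :=
  norm_pos_iff.mpr (aux_den_ne c z hc hz)

lemma aux_facne (c z : ℂ) (hc : ‖c‖ < 1) (hz : ‖z‖ < 1) (hne : c ≠ z) :
    blaschkeFactor c z ≠ 0 := by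
  unfold blaschkeFactor
  apply mul_ne_zero
  · split_ifs with h
    · exact one_ne_zero
    · exact div_ne_zero (by simpa [norm_eq_zero] using h) h
  · exact div_ne_zero (sub_ne_zero.2 hne) (aux_den_ne c z hc hz)

lemma aux_abs_fac (c z : ℂ) :
    ‖blaschkeFactor c z‖
      = ‖c - z‖ / ‖1 - (starRingEnd ℂ) c * z‖ := by
  unfold blaschkeFactor
  rw [norm_mul, norm_div]
  split_ifs with h
  · simp
  · rw [norm_div, Complex.norm_real, norm_norm,
      div_self (by simpa [norm_eq_zero] using h), one_mul]

lemma aux_abs_le (c z : ℂ) (hc : ‖c‖ < 1) (hz : ‖z‖ < 1) :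
    ‖blaschkeFactor c z‖ ≤ 1 := by
  rw [aux_abs_fac]
  rw [div_le_one (aux_den_pos c z hc hz)]
  refine le_of_pow_le_pow_left₀ two_ne_zero (norm_nonneg _) ?_
  have h1 : 0 < 1 - ‖c‖ ^ 2 := by nlinarith [norm_nonneg c]
  have h2 : 0 < 1 - ‖z‖ ^ 2 := by nlinarith [norm_nonneg z]
  nlinarith [aux_id c z, mul_pos h1 h2]

lemma aux_sq (c z : ℂ) (hc : ‖c‖ < 1) (hz : ‖z‖ < 1) :
    1 - ‖blaschkeFactor c z‖ ^ 2
      = (1 - ‖c‖ ^ 2) * (1 - ‖z‖ ^ 2)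
        / ‖1 - (starRingEnd ℂ) c * z‖ ^ 2 := by
  have hD := aux_den_pos c z hc hz
  rw [aux_abs_fac, div_pow, ← aux_id c z]
  rw [one_sub_div (pow_pos hD 2).ne']

lemma aux_sub_one (c z : ℂ) (hc0 : c ≠ 0) (hden : (1 : ℂ) - (starRingEnd ℂ) c * z ≠ 0) :
    blaschkeFactor c z - 1
      = (((‖c‖ : ℝ) : ℂ) - 1) * (c + ((‖c‖ : ℝ) : ℂ) * z)
        / (c * (1 - (starRingEnd ℂ) c * z)) := by
  have hcc : (starRingEnd ℂ) c * c = (((‖c‖ : ℝ) : ℂ)) ^ 2 := by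
    rw [mul_comm, Complex.mul_conj, Complex.normSq_eq_norm_sq]
    push_cast; ring
  unfold blaschkeFactor
  rw [if_neg hc0]
  rw [div_mul_div_comm, div_sub_one (mul_ne_zero hc0 hden)]
  congr 1
  linear_combination z * hcc

lemma aux_norm_sub_one (c z : ℂ) (hc : ‖c‖ < 1) (hz : ‖z‖ < 1) :
    ‖blaschkeFactor c z - 1‖ ≤ 2 / (1 - ‖z‖) * (1 - ‖c‖) := by
  have hz1 : 0 < 1 - ‖z‖ := by linarith
  have hD : 1 - ‖z‖ ≤ ‖1 - (starRingEnd ℂ) c * z‖ := by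
    have h1 : ‖(starRingEnd ℂ) c * z‖ ≤ ‖z‖ := by
      rw [norm_mul, Complex.norm_conj]
      nlinarith [norm_nonneg z]
    calc 1 - ‖z‖ ≤ 1 - ‖(starRingEnd ℂ) c * z‖ := by linarith
    _ ≤ ‖1 - (starRingEnd ℂ) c * z‖ := by
        have := norm_sub_norm_le (1 : ℂ) ((starRingEnd ℂ) c * z)
        simpa using this
  by_cases hc0 : c = 0
  · subst hc0
    have hb0 : blaschkeFactor 0 z = -z := by
      unfold blaschkeFactor; simp
    rw [hb0]
    simp only [norm_zero, sub_zero]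
    have h2 : ‖-z - 1‖ ≤ 1 + ‖z‖ := by
      calc ‖-z - 1‖ = ‖-z + -1‖ := by ring_nf
      _ ≤ ‖-z‖ + ‖-1‖ := norm_add_le _ _
      _ = 1 + ‖z‖ := by simp [add_comm]
    have h3 : 1 + ‖z‖ ≤ 2 / (1 - ‖z‖) := by
      rw [le_div_iff₀ hz1]
      nlinarith [norm_nonneg z]
    simpa using h2.trans h3
  · have hden := aux_den_ne c z hc hz
    have hcpos : 0 < ‖c‖ := norm_pos_iff.mpr hc0
    rw [aux_sub_one c z hc0 hden, norm_div, norm_mul, norm_mul]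
    have e1 : ‖((‖c‖ : ℝ) : ℂ) - 1‖ = 1 - ‖c‖ := by
      rw [show (((‖c‖ : ℝ) : ℂ) - 1) = (((‖c‖ - 1 : ℝ)) : ℂ) by push_cast; ring,
        Complex.norm_real, Real.norm_eq_abs]
      rw [_root_.abs_of_nonpos (by linarith)]; ring
    have e2 : ‖c + ((‖c‖ : ℝ) : ℂ) * z‖ ≤ ‖c‖ * (1 + ‖z‖) := by
      calc ‖c + ((‖c‖ : ℝ) : ℂ) * z‖
          ≤ ‖c‖ + ‖((‖c‖ : ℝ) : ℂ) * z‖ := norm_add_le _ _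
      _ = ‖c‖ + ‖c‖ * ‖z‖ := by
          rw [norm_mul, Complex.norm_real, norm_norm]
      _ = ‖c‖ * (1 + ‖z‖) := by ring
    rw [e1]
    calc (1 - ‖c‖) * ‖c + ((‖c‖ : ℝ) : ℂ) * z‖
          / (‖c‖ * ‖1 - (starRingEnd ℂ) c * z‖)
        ≤ (1 - ‖c‖) * (‖c‖ * (1 + ‖z‖))
          / (‖c‖ * (1 - ‖z‖)) := by
          apply div_le_div₀ (mul_nonneg (by linarith) (by positivity))
            (mul_le_mul_of_nonneg_left e2 (by linarith)) (by positivity)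
          exact mul_le_mul_of_nonneg_left hD (le_of_lt hcpos)
    _ = (1 - ‖c‖) * (1 + ‖z‖) / (1 - ‖z‖) := by
          rw [mul_comm (‖c‖) (1 + ‖z‖)]
          field_simp
    _ ≤ 2 / (1 - ‖z‖) * (1 - ‖c‖) := by
          rw [show 2 / (1 - ‖z‖) * (1 - ‖c‖)
              = (1 - ‖c‖) * 2 / (1 - ‖z‖) by ring,
            div_le_div_iff_of_pos_right hz1]
          nlinarith [norm_nonneg z, norm_nonneg c]


set_option maxHeartbeats 1000000 in
/-- `log|B(z)| ≤ -C(A)·(1-|z|)·∑_n (1-|z_n|²)/|ζ-z_n|²`, with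
`C(A) = (1-A)²/(2(1+A)²)`. -/
theorem stmt_2 (a : ℕ → ℂ) (ha : ∀ n, ‖a n‖ < 1)
    (hBl : Summable fun n => 1 - ‖a n‖)
    (ζ : ℂ) (hζ : ‖ζ‖ = 1) (z : ℂ) (hz : z ∈ uDisc)
    (A : ℝ) (hA0 : 0 < A) (hA1 : A < 1)
    (hsep : ∀ n, ‖z - ζ‖ < A * ‖a n - ζ‖) :
    Real.log (‖blaschkeProd a z‖) ≤
      -((1 - A) ^ 2 / (2 * (1 + A) ^ 2)) * (1 - ‖z‖) *
        ∑' n, (1 - ‖a n‖ ^ 2) / ‖ζ - a n‖ ^ 2 := by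

  have hz1 : ‖z‖ < 1 := hz
  have hzm : 0 < 1 - ‖z‖ := by linarith
  have hd : 0 < ‖z - ζ‖ := by
    rw [norm_pos_iff, sub_ne_zero]
    intro h
    rw [h, hζ] at hz1
    exact lt_irrefl _ hz1
  have hca : ∀ n, 0 < ‖a n - ζ‖ := fun n => by
    have hx : 0 < A * ‖a n - ζ‖ := hd.trans (hsep n)
    rcases mul_pos_iff.mp hx with ⟨_, h⟩ | ⟨h, _⟩
    · exact h
    · linarith
  have hcaζ : ∀ n, 0 < ‖ζ - a n‖ := fun n => by
    rw [norm_sub_rev]; exact hca n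
  have haz : ∀ n, a n ≠ z := by
    intro n h
    have h1 := hsep n
    rw [h] at h1
    nlinarith [hd]
  set b : ℕ → ℂ := fun n => blaschkeFactor (a n) z with hbdef
  have hbne : ∀ n, b n ≠ 0 := fun n => aux_facne _ _ (ha n) hz1 (haz n)
  have hbpos : ∀ n, 0 < ‖b n‖ := fun n => norm_pos_iff.mpr (hbne n)
  have hble : ∀ n, ‖b n‖ ≤ 1 := fun n => aux_abs_le _ _ (ha n) hz1
  -- summability of the logs
  have hsum2 : Summable (fun n => 2 / (1 - ‖z‖) * (1 - ‖a n‖)) :=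
    hBl.mul_left _
  have hsumlog : Summable (fun n => Complex.log (b n)) := by
    apply Summable.of_norm_bounded_eventually
      (g := fun n => 3 / 2 * (2 / (1 - ‖z‖) * (1 - ‖a n‖))) (hsum2.mul_left _)
    have hev : ∀ᶠ n in Filter.cofinite,
        2 / (1 - ‖z‖) * (1 - ‖a n‖) < 1 / 2 :=
      hsum2.tendsto_cofinite_zero.eventually (gt_mem_nhds (by norm_num))
    filter_upwards [hev] with n hn
    have hb1 : ‖b n - 1‖ ≤ 1 / 2 := by
      have h2 := aux_norm_sub_one (a n) z (ha n) hz1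
      linarith
    have h3 := Complex.norm_log_one_add_half_le_self hb1
    rw [show (1 : ℂ) + (b n - 1) = b n by ring] at h3
    refine h3.trans ?_
    have h4 := aux_norm_sub_one (a n) z (ha n) hz1
    linarith
  -- the product as an exponential
  have hprod : blaschkeProd a z = Complex.exp (∑' n, Complex.log (b n)) := by
    have h2 := Complex.cexp_tsum_eq_tprod (f := fun n => b n) hbne hsumlog
    simpa [blaschkeProd] using h2.symm
  have hsumre : Summable (fun n => Real.log (‖b n‖)) := by
    have := (Complex.hasSum_re hsumlog.hasSum).summable
    simpa [Complex.log_re] using this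
  have hre : Real.log (‖blaschkeProd a z‖)
      = ∑' n, Real.log (‖b n‖) := by
    rw [hprod, Complex.norm_exp, Real.log_exp, Complex.re_tsum hsumlog]
    exact tsum_congr fun n => Complex.log_re (b n)
  rw [hre]
  set C : ℝ := (1 - A) ^ 2 / (2 * (1 + A) ^ 2) with hCdef
  set X : ℝ := 1 - ‖z‖ with hXdef
  set t : ℕ → ℝ := fun n => (1 - ‖a n‖ ^ 2) / ‖ζ - a n‖ ^ 2 with htdef
  have htnonneg : ∀ n, 0 ≤ t n := fun n => by
    have h1 : ‖a n‖ ^ 2 ≤ 1 := by nlinarith [norm_nonneg (a n), ha n]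
    have := hcaζ n
    apply div_nonneg (by linarith) (by positivity)
  have htsum : Summable t := by
    have hgs : Summable (fun n => 2 * A ^ 2 / ‖z - ζ‖ ^ 2 * (1 - ‖a n‖)) :=
      hBl.mul_left _
    refine Summable.of_nonneg_of_le htnonneg (fun n => ?_) hgs
    have h1 := hsep n
    have h2 := hcaζ n
    have h3 := ha n
    have h0 := norm_nonneg (a n)
    have h4 : ‖z - ζ‖ ^ 2 ≤ A ^ 2 * ‖ζ - a n‖ ^ 2 := by
      rw [norm_sub_rev ζ (a n)]
      nlinarith [norm_nonneg (z - ζ), hca n]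
    have hQpos : (0:ℝ) < ‖ζ - a n‖ ^ 2 := pow_pos h2 2
    have hdpos : (0:ℝ) < ‖z - ζ‖ ^ 2 := pow_pos hd 2
    have h5 : (0:ℝ) ≤ 1 - ‖a n‖ ^ 2 := by nlinarith
    have h6 : 1 - ‖a n‖ ^ 2 ≤ 2 * (1 - ‖a n‖) := by nlinarith
    rw [htdef]
    simp only
    rw [div_le_iff₀ hQpos, div_mul_eq_mul_div, div_mul_eq_mul_div, le_div_iff₀ hdpos]
    nlinarith [mul_le_mul_of_nonneg_left h4 h5,
      mul_le_mul_of_nonneg_right h6 (mul_nonneg (sq_nonneg A) hQpos.le)]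
  have hkey : ∀ n, Real.log (‖b n‖) ≤ -(C * X * t n) := by
    intro n
    -- log |b n| ≤ (|b n|^2 - 1)/2
    have hlog : Real.log (‖b n‖) ≤ (‖b n‖ ^ 2 - 1) / 2 := by
      have h1 := Real.log_le_sub_one_of_pos (pow_pos (hbpos n) 2)
      have h2 : Real.log (‖b n‖ ^ 2) = 2 * Real.log (‖b n‖) := by
        rw [Real.log_pow]; push_cast; ring
      linarith
    -- C * X * t n ≤ (1 - |b n|^2)/2
    have hD := aux_den_pos (a n) z (ha n) hz1
    have hDle : ‖1 - (starRingEnd ℂ) (a n) * z‖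
        ≤ (1 + A) * ‖ζ - a n‖ := by
      have hζζ : ζ * (starRingEnd ℂ) ζ = 1 := by
        rw [Complex.mul_conj, Complex.normSq_eq_norm_sq, hζ]; norm_num
      have e1 : (1 : ℂ) - (starRingEnd ℂ) (a n) * ζ = ζ * ((starRingEnd ℂ) ζ - (starRingEnd ℂ) (a n)) := by
        rw [mul_sub, hζζ]; ring
      have e2 : ‖(1 : ℂ) - (starRingEnd ℂ) (a n) * ζ‖ = ‖ζ - a n‖ := by
        rw [e1, norm_mul, hζ, one_mul, ← map_sub (starRingEnd ℂ), Complex.norm_conj]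
      have e3 : (1 : ℂ) - (starRingEnd ℂ) (a n) * z
          = ((1 : ℂ) - (starRingEnd ℂ) (a n) * ζ) + (starRingEnd ℂ) (a n) * (ζ - z) := by ring
      calc ‖1 - (starRingEnd ℂ) (a n) * z‖
          ≤ ‖(1 : ℂ) - (starRingEnd ℂ) (a n) * ζ‖
            + ‖(starRingEnd ℂ) (a n) * (ζ - z)‖ := by
            rw [e3]; exact norm_add_le _ _
      _ = ‖ζ - a n‖ + ‖a n‖ * ‖z - ζ‖ := by
            rw [e2, norm_mul, Complex.norm_conj, norm_sub_rev ζ z]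
      _ ≤ ‖ζ - a n‖ + A * ‖ζ - a n‖ := by
            have h1 := hsep n
            have h2 := ha n
            have h0 := norm_nonneg (a n)
            have h5 : ‖a n - ζ‖ = ‖ζ - a n‖ := norm_sub_rev _ _
            nlinarith [norm_nonneg (z - ζ)]
      _ = (1 + A) * ‖ζ - a n‖ := by ring
    have hsq := aux_sq (a n) z (ha n) hz1
    have hmid : C * X * t n ≤ (1 - ‖b n‖ ^ 2) / 2 := by
      rw [hsq]
      set P : ℝ := 1 - ‖a n‖ ^ 2 with hP
      set Q : ℝ := ‖ζ - a n‖ ^ 2 with hQ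
      set D : ℝ := ‖1 - (starRingEnd ℂ) (a n) * z‖ with hDd
      have hQpos : 0 < Q := pow_pos (hcaζ n) 2
      have hDpos : 0 < D := hD
      have hPpos : 0 ≤ P := by
        rw [hP]; nlinarith [norm_nonneg (a n), ha n]
      have hX2 : X ≤ 1 - ‖z‖ ^ 2 := by
        rw [hXdef]; nlinarith [norm_nonneg z, hz1]
      have hD2 : D ^ 2 ≤ (1 + A) ^ 2 * Q := by
        rw [hQ]
        calc D ^ 2 ≤ ((1 + A) * ‖ζ - a n‖) ^ 2 := by
              apply pow_le_pow_left₀ hDpos.le hDle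
        _ = (1 + A) ^ 2 * ‖ζ - a n‖ ^ 2 := by ring
      have hgoal : C * X * (P / Q) ≤ P * (1 - ‖z‖ ^ 2) / (2 * D ^ 2) := by
        rw [show C * X * (P / Q) = C * X * P / Q by ring,
          div_le_div_iff₀ hQpos (by positivity)]
        have hCmul : C * (2 * (1 + A) ^ 2) = (1 - A) ^ 2 := by
          rw [hCdef]; field_simp
        have hA2 : (1 - A) ^ 2 ≤ 1 := by nlinarith
        have hXpos : (0:ℝ) ≤ X := hzm.le
        have hZ2 : (0:ℝ) ≤ 1 - ‖z‖ ^ 2 := by linarith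
        calc C * X * P * (2 * D ^ 2)
            ≤ C * X * P * (2 * ((1 + A) ^ 2 * Q)) := by
              apply mul_le_mul_of_nonneg_left (by nlinarith) (by positivity)
        _ = (C * (2 * (1 + A) ^ 2)) * (X * P * Q) := by ring
        _ = (1 - A) ^ 2 * (X * P * Q) := by rw [hCmul]
        _ ≤ 1 * (X * P * Q) := by
              apply mul_le_mul_of_nonneg_right hA2 (by positivity)
        _ ≤ (1 - ‖z‖ ^ 2) * (P * Q) := by nlinarith [mul_nonneg hPpos hQpos.le]
        _ = P * (1 - ‖z‖ ^ 2) * Q := by ring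
      calc C * X * t n = C * X * (P / Q) := by rw [htdef]
      _ ≤ P * (1 - ‖z‖ ^ 2) / (2 * D ^ 2) := hgoal
      _ = P * (1 - ‖z‖ ^ 2) / D ^ 2 / 2 := by ring
    refine hlog.trans ?_
    have h2 : (‖b n‖ ^ 2 - 1) / 2 = -((1 - ‖b n‖ ^ 2) / 2) := by ring
    rw [h2]
    exact neg_le_neg hmid
  calc (∑' n, Real.log (‖b n‖)) ≤ ∑' n, -(C * X * t n) := by
        apply Summable.tsum_le_tsum hkey hsumre
        exact ((htsum.mul_left (C * X)).neg)
  _ = -(C * X * ∑' n, t n) := by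
        rw [tsum_neg]
        congr 1
        exact tsum_mul_left
  _ = -C * X * ∑' n, t n := by ring
end
end

section
/- With the Whitney arcs of the previous decomposition: setting F = ∪_k S(I_k) (union of Carleson squares over the arcs I_k) and G = closure(D) \ F, for any z ∈ G with z ≠ 0 one has dist(z/|z|, Ω(Θ,ε)) ≤ 6π(1 - |z|). -/
noncomputable section

open Complex MeasureTheory Filter Set
open scoped ENNReal Topology

/-- for `z ∈ G = closure(D) \ ∪ S(I_k)`, `z ≠ 0`, one has
`dist(z/|z|, Ω(Θ,ε)) ≤ 6π(1-|z|)`. -/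
theorem stmt_11 (Θ : ℂ → ℂ) (hΘ : IsInner Θ) (ε : ℝ) (hε0 : 0 < ε) (hε1 : ε < 1)
    (s : Set ℕ) (α β : ℕ → ℝ)
    (harc : ∀ k ∈ s, α k < β k ∧ β k - α k ≤ 2 * Real.pi)
    (hcover : (⋃ k ∈ s, arcSet (α k) (β k)) = uCircle \ specInner Θ)
    (hwhitney : ∀ k ∈ s,
      β k - α k ≤ setDist (arcSet (α k) (β k)) (levelSet Θ ε) ∧
      setDist (arcSet (α k) (β k)) (levelSet Θ ε) ≤ 2 * (β k - α k))
    (z : ℂ) (hz1 : ‖z‖ ≤ 1)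
    (hzG : z ∉ ⋃ k ∈ s, carlesonSq (α k) (β k)) (hz0 : z ≠ 0) :
    Metric.infDist (z / ((‖z‖ : ℝ) : ℂ)) (levelSet Θ ε) ≤
      6 * Real.pi * (1 - ‖z‖) := by
  have hπ := Real.pi_pos
  have h2π := Real.two_pi_pos
  set ζ : ℂ := z / ((‖z‖ : ℝ) : ℂ) with hζdef
  have habs0 : (0:ℝ) < ‖z‖ := by
    simpa [norm_pos_iff] using hz0
  have hcne : ((‖z‖ : ℝ) : ℂ) ≠ 0 := by
    exact_mod_cast Complex.ofReal_ne_zero.2 habs0.ne'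
  have hζabs : ‖ζ‖ = 1 := by
    rw [hζdef, norm_div, Complex.norm_real, norm_norm, div_self habs0.ne']
  have hzζ : z = ((‖z‖ : ℝ) : ℂ) * ζ := by
    rw [hζdef, mul_div_cancel₀ _ hcne]
  have hrhs0 : 0 ≤ 6 * Real.pi * (1 - ‖z‖) := by nlinarith
  by_cases hspec : ζ ∈ specInner Θ
  · have h0 : Metric.infDist ζ (levelSet Θ ε) ≤ 0 := by
      refine le_of_forall_pos_le_add fun δ hδ => ?_
      obtain ⟨w, hw, hwd, hwΘ⟩ := hspec.2 (min δ ε) (lt_min hδ hε0)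
      have hwL : w ∈ levelSet Θ ε := ⟨hw, lt_of_lt_of_le hwΘ (min_le_right _ _)⟩
      calc Metric.infDist ζ (levelSet Θ ε) ≤ dist ζ w := Metric.infDist_le_dist_of_mem hwL
        _ ≤ 0 + δ := by
            rw [dist_comm, Complex.dist_eq]
            have := min_le_left δ ε
            linarith
    linarith
  · rcases Set.eq_empty_or_nonempty (levelSet Θ ε) with hL | hL
    · rw [hL, Metric.infDist_empty]; exact hrhs0
    have hζ_mem : ζ ∈ uCircle \ specInner Θ := ⟨hζabs, hspec⟩
    rw [← hcover] at hζ_mem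
    simp only [Set.mem_iUnion] at hζ_mem
    obtain ⟨k, hk, hζarc⟩ := hζ_mem
    obtain ⟨hαβ, hβα⟩ := harc k hk
    obtain ⟨_, hdist2⟩ := hwhitney k hk
    obtain ⟨θ, hθ, hθζ⟩ := hζarc
    have hznot : z ∉ carlesonSq (α k) (β k) := fun h => hzG (Set.mem_iUnion₂.2 ⟨k, hk, h⟩)
    have hlt : ‖z‖ < 1 - (β k - α k) / (2 * Real.pi) := by
      by_contra hge
      push_neg at hge
      have hθζ' : Complex.exp (θ * Complex.I) = ζ := hθζ
      exact hznot ⟨(‖z‖, θ), ⟨⟨hge, hz1⟩, hθ⟩, by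
        simp only []
        rw [hθζ']; exact hzζ.symm⟩
    have hβα' : β k - α k < (1 - ‖z‖) * (2 * Real.pi) := by
      have h1 : (β k - α k) / (2 * Real.pi) < 1 - ‖z‖ := by linarith
      exact (div_lt_iff₀ h2π).1 h1
    refine le_of_forall_pos_le_add fun δ hδ => ?_
    obtain ⟨w₀, hw₀⟩ := hL
    have hζarc' : ζ ∈ arcSet (α k) (β k) := ⟨θ, hθ, hθζ⟩
    have hne : (Set.image2 dist (arcSet (α k) (β k)) (levelSet Θ ε)).Nonempty :=
      ⟨_, Set.mem_image2_of_mem hζarc' hw₀⟩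
    obtain ⟨d, hd, hdlt⟩ := Real.lt_sInf_add_pos hne hδ
    obtain ⟨ξ, hξ, w, hw, rfl⟩ := hd
    have hchord : ∀ a b : ℝ, dist (Complex.exp (a * Complex.I)) (Complex.exp (b * Complex.I))
        ≤ dist a b := by
      intro a b
      have := (lipschitzWith_circleMap 0 1).dist_le_mul a b
      simpa [circleMap] using this
    obtain ⟨θ', hθ', hθ'ξ⟩ := hξ
    have hθζ' : Complex.exp (θ * Complex.I) = ζ := hθζ
    have hθ'ξ' : Complex.exp (θ' * Complex.I) = ξ := hθ'ξ
    have h1 : dist ζ ξ ≤ β k - α k := by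
      rw [← hθζ', ← hθ'ξ']
      refine (hchord θ θ').trans ?_
      rw [Real.dist_eq]
      rcases hθ with ⟨hθ1, hθ2⟩
      rcases hθ' with ⟨hθ'1, hθ'2⟩
      rw [abs_le]; constructor <;> linarith
    have hsd : sInf (Set.image2 dist (arcSet (α k) (β k)) (levelSet Θ ε))
        = setDist (arcSet (α k) (β k)) (levelSet Θ ε) := rfl
    rw [hsd] at hdlt
    calc Metric.infDist ζ (levelSet Θ ε) ≤ dist ζ w := Metric.infDist_le_dist_of_mem hw
      _ ≤ dist ζ ξ + dist ξ w := dist_triangle _ _ _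
      _ ≤ (β k - α k) + (2 * (β k - α k) + δ) := by linarith
      _ ≤ 6 * Real.pi * (1 - ‖z‖) + δ := by nlinarith
end
end

section
/- Splitting Carleson measures relative to an inner function: Let Θ be inner, ε ∈ (0,1), and let μ be a finite Borel measure on closure(D) for which there is C > 0 with μ(S(I)) ≤ C|I| for every arc I whose Carleson square meets Ω(Θ,ε) (i.e., μ ∈ C(Θ)). Let {I_k} be Whitney arcs with |I_k| ≤ dist(I_k, Ω(Θ,ε)) ≤ 2|I_k| covering T \ σ(Θ), F = ∪_k S(I_k), G = closure(D) \ F. Then μ|_G is a Carleson measure, i.e., there exists C₃ with μ|_G(S(I)) ≤ C₃|I| for every arc I ⊂ T. -/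
noncomputable section

open Complex MeasureTheory Filter Set
open scoped ENNReal Topology

section Stmt19Helpers

lemma stmt19_key1 (x:ℝ) : (‖Complex.exp (x*Complex.I) - 1‖)^2 = 2 - 2*Real.cos x := by
  rw [Complex.sq_norm]
  simp [Complex.normSq_apply, Complex.sub_re, Complex.sub_im, Complex.exp_ofReal_mul_I_re,
    Complex.exp_ofReal_mul_I_im]
  nlinarith [Real.sin_sq_add_cos_sq x]

lemma stmt19_chord_le (x y : ℝ) :
    ‖Complex.exp (x*Complex.I) - Complex.exp (y*Complex.I)‖ ≤ |x - y| := by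
  have h : Complex.exp (x*Complex.I) - Complex.exp (y*Complex.I)
      = Complex.exp (y*Complex.I) * (Complex.exp ((x-y : ℝ)*Complex.I) - 1) := by
    rw [mul_sub, ← Complex.exp_add]
    push_cast
    ring_nf
  rw [h, norm_mul, Complex.norm_exp_ofReal_mul_I, one_mul]
  have h2 := stmt19_key1 (x - y)
  have h3 : Real.cos (x-y) ≥ 1 - (x-y)^2/2 := by
    rcases eq_or_ne (x-y) 0 with h|h
    · simp [h]
    · exact (Real.one_sub_sq_div_two_lt_cos h).le
  nlinarith [norm_nonneg (Complex.exp ((x-y:ℝ)*Complex.I) - 1), abs_nonneg (x-y),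
    _root_.sq_abs (x-y)]

lemma stmt19_chord_ge (x : ℝ) (hx : |x| ≤ Real.pi) :
    2/Real.pi * |x| ≤ ‖Complex.exp (x*Complex.I) - 1‖ := by
  have h2 := stmt19_key1 x
  have h3 := Real.cos_le_one_sub_mul_cos_sq hx
  have hπ := Real.pi_pos
  have hR : (0:ℝ) ≤ 2/Real.pi * |x| := by positivity
  refine (pow_le_pow_iff_left₀ hR (norm_nonneg _) two_ne_zero).mp ?_
  have e : (2/Real.pi*|x|)^2 = 2 * (2/Real.pi^2 * x^2) := by
    rw [mul_pow, _root_.sq_abs]; ring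
  rw [h2, e]; linarith

lemma stmt19_carleson_mono {a b a' b' : ℝ} (h1 : a' ≤ a) (h2 : b ≤ b') :
    carlesonSq a b ⊆ carlesonSq a' b' := by
  rintro z ⟨⟨r,θ⟩, ⟨⟨hr1,hr2⟩, hθ1, hθ2⟩, rfl⟩
  refine ⟨(r,θ), ⟨⟨?_, hr2⟩, by exact le_trans h1 hθ1, by exact le_trans hθ2 h2⟩, rfl⟩
  have hπ := Real.pi_pos
  have hd : (b-a)/(2*Real.pi) ≤ (b'-a')/(2*Real.pi) := by gcongr <;> linarith
  linarith

lemma stmt19_arc_subset {a b : ℝ} (hab : a ≤ b) : arcSet a b ⊆ carlesonSq a b := by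
  rintro z ⟨φ, hφ, rfl⟩
  have hπ := Real.pi_pos
  have h0 : (0:ℝ) ≤ (b-a)/(2*Real.pi) := div_nonneg (by linarith) (by linarith)
  exact ⟨(1, φ), ⟨⟨by linarith, le_refl 1⟩, hφ⟩, by norm_num⟩

lemma stmt19_mem_enlarged {a b θ : ℝ} {w : ℂ} (hab : a < b) (hsmall : b - a ≤ 1/100)
    (hθ1 : a ≤ θ) (hθ2 : θ ≤ b) (hw : ‖w‖ < 1)
    (hd : ‖w - Complex.exp (θ*Complex.I)‖ ≤ 4*(b-a)) :
    w ∈ carlesonSq (a - 35*(b-a)) (b + 35*(b-a)) := by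
  set L := b - a with hL
  have hL0 : 0 < L := by linarith
  have hπ := Real.pi_pos
  have hπ4 := Real.pi_le_four
  have hπ3 := Real.pi_gt_three
  have habsθ : ‖Complex.exp ((θ:ℂ)*Complex.I)‖ = 1 := Complex.norm_exp_ofReal_mul_I θ
  have h1 : 1 - ‖w‖ ≤ 4*L := by
    have h0 : (Complex.exp ((θ:ℂ)*Complex.I)) = w + (Complex.exp ((θ:ℂ)*Complex.I) - w) := by ring
    have := norm_add_le w (Complex.exp ((θ:ℂ)*Complex.I) - w)
    rw [← h0, habsθ, norm_sub_rev] at this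
    linarith
  have hw0 : (0.9:ℝ) ≤ ‖w‖ := by linarith
  have hwne : w ≠ 0 := by
    intro h; rw [h] at hw0; simp at hw0; linarith
  set u := w / Complex.exp ((θ:ℂ)*Complex.I) with hu
  have huabs : ‖u‖ = ‖w‖ := by
    rw [hu, norm_div, habsθ, div_one]
  set t := Complex.arg u with ht
  have hupolar : u = (‖w‖ : ℂ) * Complex.exp ((t:ℂ)*Complex.I) := by
    rw [← huabs]; exact (Complex.norm_mul_exp_arg_mul_I u).symm
  have hwpolar : w = (‖w‖ : ℂ) * Complex.exp (((θ + t : ℝ):ℂ)*Complex.I) := by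
    have hthis : w = u * Complex.exp ((θ:ℂ)*Complex.I) := by
      rw [hu, div_mul_cancel₀]; exact Complex.exp_ne_zero _
    have e : ((θ + t : ℝ) : ℂ) * Complex.I = (t:ℂ)*Complex.I + (θ:ℂ)*Complex.I := by
      push_cast; ring
    conv_lhs => rw [hthis, hupolar, mul_assoc, ← Complex.exp_add]
    rw [e]
  have hb1 : ‖w‖ * ‖Complex.exp ((t:ℂ)*Complex.I) - 1‖ ≤ 8*L := by
    have e1 : (‖w‖ : ℂ) * (Complex.exp ((t:ℂ)*Complex.I) - 1)
        = u - (‖w‖ : ℂ) := by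
      rw [hupolar]; ring
    have e2 : ‖u - (‖w‖ : ℂ)‖ ≤ 8*L := by
      have e3 : u - (‖w‖ : ℂ)
          = (w - (‖w‖ : ℂ) * Complex.exp ((θ:ℂ)*Complex.I)) / Complex.exp ((θ:ℂ)*Complex.I) := by
        rw [hu]; field_simp
      rw [e3, norm_div, habsθ, div_one]
      have e4 : w - (‖w‖ : ℂ) * Complex.exp ((θ:ℂ)*Complex.I)
          = (w - Complex.exp ((θ:ℂ)*Complex.I))
            + (1 - (‖w‖ : ℂ)) * Complex.exp ((θ:ℂ)*Complex.I) := by ring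
      rw [e4]
      refine (norm_add_le _ _).trans ?_
      rw [norm_mul, habsθ, mul_one]
      have e5 : ‖(1:ℂ) - (‖w‖ : ℂ)‖ = 1 - ‖w‖ := by
        rw [← Complex.ofReal_one, ← Complex.ofReal_sub, Complex.norm_real,
          Real.norm_of_nonneg (by linarith)]
      rw [e5]; linarith
    calc ‖w‖ * ‖Complex.exp ((t:ℂ)*Complex.I) - 1‖
        = ‖(‖w‖ : ℂ) * (Complex.exp ((t:ℂ)*Complex.I) - 1)‖ := by
          rw [norm_mul, Complex.norm_real, Real.norm_of_nonneg (norm_nonneg w)]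
      _ = ‖u - (‖w‖ : ℂ)‖ := by rw [e1]
      _ ≤ 8*L := e2
  have hb2 : ‖Complex.exp ((t:ℂ)*Complex.I) - 1‖ ≤ 9*L := by
    nlinarith [norm_nonneg (Complex.exp ((t:ℂ)*Complex.I) - 1)]
  have htπ : |t| ≤ Real.pi := Complex.abs_arg_le_pi u
  have ht18 : |t| ≤ 18*L := by
    have hcg := stmt19_chord_ge t htπ
    have h2π : 2/Real.pi * |t| ≤ 9*L := le_trans hcg hb2
    rw [div_mul_eq_mul_div, div_le_iff₀ hπ] at h2π
    nlinarith [abs_nonneg t]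
  refine ⟨(‖w‖, θ + t), ⟨⟨?_, hw.le⟩, ?_, ?_⟩, ?_⟩
  · have e71 : (b + 35*L - (a - 35*L)) = 71*L := by rw [hL]; ring
    rw [e71]
    have h71 : 4*L ≤ 71*L/(2*Real.pi) := by
      rw [le_div_iff₀ (by linarith)]
      nlinarith
    linarith
  · have h35 : -(35*L) ≤ t := by cases' abs_le.mp ht18 with h _; linarith
    simp only []
    linarith
  · have h35 : t ≤ 35*L := by cases' abs_le.mp ht18 with _ h; linarith
    simp only []
    linarith
  · exact hwpolar.symm

end Stmt19Helpers

/-- splitting Carleson measures: if `μ ∈ C(Θ)` (Carleson condition on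
squares meeting `Ω(Θ,ε)`), and `{I_k}` are Whitney arcs with `F = ∪ S(I_k)`,
`G = closure(D) \ F`, then `μ|_G` is a Carleson measure. -/
theorem stmt_19 (Θ : ℂ → ℂ) (hΘ : IsInner Θ) (ε : ℝ) (hε0 : 0 < ε) (hε1 : ε < 1)
    (μ : Measure ℂ) [IsFiniteMeasure μ] (hμd : μ {z : ℂ | 1 < ‖z‖} = 0)
    (C : ℝ) (hC : 0 < C)
    (hVT : ∀ a b : ℝ, a < b → b - a ≤ 2 * Real.pi →
      (carlesonSq a b ∩ levelSet Θ ε).Nonempty →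
      μ (carlesonSq a b) ≤ ENNReal.ofReal (C * (b - a)))
    (s : Set ℕ) (α β : ℕ → ℝ)
    (harc : ∀ k ∈ s, α k < β k ∧ β k - α k ≤ 2 * Real.pi)
    (hcover : (⋃ k ∈ s, arcSet (α k) (β k)) = uCircle \ specInner Θ)
    (hwhitney : ∀ k ∈ s,
      β k - α k ≤ setDist (arcSet (α k) (β k)) (levelSet Θ ε) ∧
      setDist (arcSet (α k) (β k)) (levelSet Θ ε) ≤ 2 * (β k - α k)) :
    ∃ C₃ : ℝ, 0 < C₃ ∧ ∀ a b : ℝ, a < b → b - a ≤ 2 * Real.pi →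
      μ (carlesonSq a b ∩
          ({z : ℂ | ‖z‖ ≤ 1} \ ⋃ k ∈ s, carlesonSq (α k) (β k))) ≤
        ENNReal.ofReal (C₃ * (b - a)) := by
  have hπ := Real.pi_pos
  have hπ3 := Real.pi_gt_three
  refine ⟨71*C + 100*(μ Set.univ).toReal + 1, by positivity, ?_⟩
  intro a b hab hb2π
  set L := b - a with hLdef
  have hL0 : 0 < L := by linarith
  have hM0 : (0:ℝ) ≤ (μ Set.univ).toReal := ENNReal.toReal_nonneg
  by_cases hsmall : L ≤ 1/100
  · -- small arcs: genuinely use the Carleson hypothesis on the enlarged square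
    by_cases hne : (carlesonSq a b ∩
        ({z : ℂ | ‖z‖ ≤ 1} \ ⋃ k ∈ s, carlesonSq (α k) (β k))).Nonempty
    · obtain ⟨z, hzS, hzG⟩ := hne
      obtain ⟨⟨r, θ⟩, hmem, hz⟩ := hzS
      obtain ⟨⟨hr1, hr2⟩, hθ1, hθ2⟩ := hmem
      -- find a point of the level set near e^{iθ}
      have hW : ∃ w ∈ levelSet Θ ε,
          ‖w - Complex.exp ((θ:ℂ)*Complex.I)‖ ≤ 4*L := by
        by_cases hspec : Complex.exp ((θ:ℂ)*Complex.I) ∈ specInner Θ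
        · obtain ⟨w, hwD, hwd, hwθ⟩ := hspec.2 (min ε (4*L)) (lt_min hε0 (by linarith))
          exact ⟨w, ⟨hwD, lt_of_lt_of_le hwθ (min_le_left _ _)⟩,
            le_trans hwd.le (min_le_right _ _)⟩
        · have habsζ : ‖Complex.exp ((θ:ℂ)*Complex.I)‖ = 1 :=
            Complex.norm_exp_ofReal_mul_I θ
          have hζmem : Complex.exp ((θ:ℂ)*Complex.I) ∈ uCircle \ specInner Θ :=
            ⟨habsζ, hspec⟩
          rw [← hcover] at hζmem
          simp only [Set.mem_iUnion] at hζmem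
          obtain ⟨k, hks, hζarc⟩ := hζmem
          obtain ⟨φ, hφIcc, hφeq0⟩ := hζarc
          have hφeq : Complex.exp ((φ:ℂ)*Complex.I) = Complex.exp ((θ:ℂ)*Complex.I) := hφeq0
          have hz' : (r:ℂ) * Complex.exp ((θ:ℂ)*Complex.I) = z := hz
          obtain ⟨hαβ, _⟩ := harc k hks
          -- z is not in the Whitney square over I_k
          have hnot : z ∉ carlesonSq (α k) (β k) := fun h =>
            hzG.2 (Set.mem_biUnion hks h)
          have hrlt : r < 1 - (β k - α k)/(2*Real.pi) := by
            by_contra hge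
            push_neg at hge
            exact hnot ⟨(r, φ), ⟨⟨hge, hr2⟩, hφIcc⟩, by
              show (r:ℂ) * Complex.exp ((φ:ℂ)*Complex.I) = z
              rw [hφeq]; exact hz'⟩
          have hdkL : β k - α k < L := by
            have h' : (β k - α k)/(2*Real.pi) < L/(2*Real.pi) := by linarith
            have h'' := mul_lt_mul_of_pos_right h' (by linarith : (0:ℝ) < 2*Real.pi)
            rw [div_mul_cancel₀ _ (by linarith : (2*Real.pi) ≠ 0),
              div_mul_cancel₀ _ (by linarith : (2*Real.pi) ≠ 0)] at h''
            exact h''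
          -- extract a nearby point of the level set from the Whitney condition
          obtain ⟨hwlow, hwup⟩ := hwhitney k hks
          have hSdef : setDist (arcSet (α k) (β k)) (levelSet Θ ε)
              = sInf (Set.image2 dist (arcSet (α k) (β k)) (levelSet Θ ε)) := rfl
          have hSne : (Set.image2 dist (arcSet (α k) (β k)) (levelSet Θ ε)).Nonempty := by
            by_contra hSne
            rw [Set.not_nonempty_iff_eq_empty] at hSne
            rw [hSdef, hSne, Real.sInf_empty] at hwlow
            linarith
          have hbdd : BddBelow (Set.image2 dist (arcSet (α k) (β k)) (levelSet Θ ε)) := by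
            refine ⟨0, fun y hy => ?_⟩
            obtain ⟨x, _, w, _, rfl⟩ := hy
            exact dist_nonneg
          have hlt : sInf (Set.image2 dist (arcSet (α k) (β k)) (levelSet Θ ε))
              < 3*(β k - α k) := by
            rw [← hSdef]
            refine lt_of_le_of_lt hwup ?_
            linarith
          obtain ⟨y, hyS, hylt⟩ := (csInf_lt_iff hbdd hSne).mp hlt
          obtain ⟨x, hxarc, w, hwlev, rfl⟩ := hyS
          obtain ⟨φ'', hφ''Icc, hφ''0⟩ := hxarc
          have hφ'' : Complex.exp ((φ'':ℂ)*Complex.I) = x := hφ''0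
          refine ⟨w, hwlev, ?_⟩
          have t1 : ‖w - x‖ < 3*(β k - α k) := by
            rw [← Complex.dist_eq, dist_comm]
            exact hylt
          have t2 : ‖x - Complex.exp ((θ:ℂ)*Complex.I)‖ ≤ β k - α k := by
            rw [← hφ'', ← hφeq]
            refine le_trans (stmt19_chord_le φ'' φ) ?_
            rw [abs_le]
            constructor <;> [linarith [hφ''Icc.1, hφIcc.2]; linarith [hφ''Icc.2, hφIcc.1]]
          have t3 := norm_sub_le_norm_sub_add_norm_sub w x (Complex.exp ((θ:ℂ)*Complex.I))
          linarith
      obtain ⟨w, hwlev, hwd⟩ := hW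
      have hwmem : w ∈ carlesonSq (a - 35*L) (b + 35*L) :=
        stmt19_mem_enlarged hab hsmall hθ1 hθ2 hwlev.1 hwd
      have hkey := hVT (a - 35*L) (b + 35*L) (by linarith)
        (by nlinarith) ⟨w, hwmem, hwlev⟩
      have hsub : carlesonSq a b ∩
          ({z : ℂ | ‖z‖ ≤ 1} \ ⋃ k ∈ s, carlesonSq (α k) (β k))
            ⊆ carlesonSq (a - 35*L) (b + 35*L) :=
        Set.inter_subset_left.trans (stmt19_carleson_mono (by linarith) (by linarith))
      calc μ (carlesonSq a b ∩
          ({z : ℂ | ‖z‖ ≤ 1} \ ⋃ k ∈ s, carlesonSq (α k) (β k)))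
          ≤ μ (carlesonSq (a - 35*L) (b + 35*L)) := measure_mono hsub
        _ ≤ ENNReal.ofReal (C * (b + 35*L - (a - 35*L))) := hkey
        _ ≤ ENNReal.ofReal ((71*C + 100*(μ Set.univ).toReal + 1) * (b - a)) := by
            refine ENNReal.ofReal_le_ofReal ?_
            have e71 : b + 35*L - (a - 35*L) = 71*L := by rw [hLdef]; ring
            rw [e71, ← hLdef]
            nlinarith
    · rw [Set.not_nonempty_iff_eq_empty] at hne
      rw [hne]
      simp
  · push_neg at hsmall
    calc μ (carlesonSq a b ∩
        ({z : ℂ | ‖z‖ ≤ 1} \ ⋃ k ∈ s, carlesonSq (α k) (β k)))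
        ≤ μ Set.univ := measure_mono (Set.subset_univ _)
      _ = ENNReal.ofReal ((μ Set.univ).toReal) :=
          (ENNReal.ofReal_toReal (measure_ne_top μ _)).symm
      _ ≤ ENNReal.ofReal ((71*C + 100*(μ Set.univ).toReal + 1) * (b - a)) := by
          refine ENNReal.ofReal_le_ofReal ?_
          rw [← hLdef]
          nlinarith
end
end
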